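/- arXiv:2402.00133 — 2 statements merged into one kernel-verified Lean document; each statement's English description precedes it below -/
import Mathlib

section
/- Every finite quasigroup Q of order n ≥ 1 has a generating set of size at most ⌈log₂ n⌉, where the sub-quasigroup generated by a set is the smallest subset containing it that is closed under multiplication and under left and right division. -/
open Classical in
/-- Key lemma: every nonempty closed finset `H` has a generating subset of size
`≤ max 1 (clog 2 |H|)`. -/
private theorem quasigroup_key {Q : Type*} [Fintype Q]
    (mul ld rd : Q → Q → Q)
    (hleft : ∀ a b : Q, ∃! x : Q, mul a x = b)
    (hright : ∀ a b : Q, ∃! y : Q, mul y a = b)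
    (hld : ∀ a b : Q, mul a (ld a b) = b)
    (hrd : ∀ a b : Q, mul (rd a b) b = a) :
    ∀ n (H : Finset Q), H.card = n → H.Nonempty →
      (∀ a ∈ H, ∀ b ∈ H, mul a b ∈ H ∧ ld a b ∈ H ∧ rd a b ∈ H) →
      ∃ X : Finset Q, X ⊆ H ∧ X.card ≤ max 1 (Nat.clog 2 H.card) ∧
        ∀ S : Set Q, ↑X ⊆ S →
          (∀ a ∈ S, ∀ b ∈ S, mul a b ∈ S ∧ ld a b ∈ S ∧ rd a b ∈ S) →
          ↑H ⊆ S := by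
  intro n
  induction n using Nat.strong_induction_on with
  | _ n IH =>
  intro H hcard hne hclosed
  by_cases hprop : ∃ K : Finset Q, K ⊆ H ∧ K.Nonempty ∧ K ≠ H ∧
      (∀ a ∈ K, ∀ b ∈ K, mul a b ∈ K ∧ ld a b ∈ K ∧ rd a b ∈ K)
  · -- there is a proper nonempty closed subset
    by_cases h2 : H.card = 2
    · -- order-2 case: one generator suffices
      obtain ⟨a, b, hab, hH⟩ := Finset.card_eq_two.mp h2
      -- find g ∈ H with mul g g being the other element
      have haH : a ∈ H := by simp [hH]
      have hbH : b ∈ H := by simp [hH]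
      have key : (mul a a = b) ∨ (mul b b = a) := by
        by_contra hcon
        push_neg at hcon
        obtain ⟨h1, h2'⟩ := hcon
        have haa : mul a a ∈ H := (hclosed a haH a haH).1
        have haa' : mul a a = a := by
          rw [hH] at haa; simpa [h1] using haa
        have hbb : mul b b ∈ H := (hclosed b hbH b hbH).1
        have hbb' : mul b b = b := by
          rw [hH] at hbb; simpa [h2'] using hbb
        have hab' : mul a b ∈ H := (hclosed a haH b hbH).1
        rw [hH] at hab'
        rcases Finset.mem_insert.mp hab' with h | h
        · -- mul a b = a = mul a a, contradicts hleft uniqueness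
          have := (hleft a a).unique h haa'
          exact hab this.symm
        · have h' : mul a b = b := by simpa using h
          have := (hright b b).unique h' hbb'
          exact hab this
      rcases key with hk | hk
      · refine ⟨{a}, by simpa using haH, by simp, ?_⟩
        intro S hXS hS q hq
        have haS : a ∈ S := hXS (by simp)
        have hbS : b ∈ S := hk ▸ (hS a haS a haS).1
        rw [hH] at hq
        rcases Finset.mem_insert.mp hq with h | h
        · exact h ▸ haS
        · have : q = b := by simpa using h
          exact this ▸ hbS
      · refine ⟨{b}, by simpa using hbH, by simp, ?_⟩
        intro S hXS hS q hq
        have hbS : b ∈ S := hXS (by simp)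
        have haS : a ∈ S := hk ▸ (hS b hbS b hbS).1
        rw [hH] at hq
        rcases Finset.mem_insert.mp hq with h | h
        · exact h ▸ haS
        · have : q = b := by simpa using h
          exact this ▸ hbS
    · -- |H| ≥ 3 : take a proper closed subset of maximal cardinality
      classical
      set 𝒦 : Finset (Finset Q) := H.powerset.filter (fun K => K.Nonempty ∧ K ≠ H ∧
        (∀ a ∈ K, ∀ b ∈ K, mul a b ∈ K ∧ ld a b ∈ K ∧ rd a b ∈ K)) with h𝒦
      have h𝒦ne : 𝒦.Nonempty := by
        obtain ⟨K, hK1, hK2, hK3, hK4⟩ := hprop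
        exact ⟨K, Finset.mem_filter.mpr ⟨Finset.mem_powerset.mpr hK1, hK2, hK3, hK4⟩⟩
      obtain ⟨K, hK𝒦, hKmax⟩ := 𝒦.exists_max_image Finset.card h𝒦ne
      simp only [h𝒦, Finset.mem_filter, Finset.mem_powerset] at hK𝒦
      obtain ⟨hKH, hKne, hKneH, hKcl⟩ := hK𝒦
      -- pick x ∈ H \ K
      have hx : ∃ x, x ∈ H ∧ x ∉ K := by
        by_contra hcon
        push_neg at hcon
        exact hKneH (Finset.Subset.antisymm hKH hcon)
      obtain ⟨x, hxH, hxK⟩ := hx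
      -- the image x·K is disjoint from K and inside H
      have hinj : Set.InjOn (mul x) ↑K := by
        intro k1 _ k2 _ hkk
        exact ((hleft x (mul x k2)).unique hkk rfl)
      have himcard : (K.image (mul x)).card = K.card :=
        Finset.card_image_of_injOn hinj
      have himH : K.image (mul x) ⊆ H := by
        intro c hc
        obtain ⟨k, hk, rfl⟩ := Finset.mem_image.mp hc
        exact (hclosed x hxH k (hKH hk)).1
      have hdisj : Disjoint (K.image (mul x)) K := by
        rw [Finset.disjoint_left]
        intro c hc hcK
        obtain ⟨k, hk, hck⟩ := Finset.mem_image.mp hc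
        have hrdK : rd c k ∈ K := (hKcl c hcK k hk).2.2
        have : x = rd c k := (hright k c).unique hck (hrd c k)
        exact hxK (this ▸ hrdK)
      have hcard2 : 2 * K.card ≤ H.card := by
        have : (K.image (mul x)) ∪ K ⊆ H := Finset.union_subset himH hKH
        have hu := Finset.card_le_card this
        rw [Finset.card_union_of_disjoint hdisj, himcard] at hu
        omega
      -- apply induction hypothesis to K
      have hKlt : K.card < n := by
        have := Finset.card_pos.mpr hKne
        omega
      obtain ⟨X', hX'K, hX'card, hX'gen⟩ := IH K.card hKlt K rfl hKne hKcl
      refine ⟨insert x X', ?_, ?_, ?_⟩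
      · exact Finset.insert_subset hxH (hX'K.trans hKH)
      · -- cardinality arithmetic
        have hcardins : (insert x X').card ≤ X'.card + 1 := Finset.card_insert_le _ _
        have hH3 : 3 ≤ H.card := by
          have h1 : 1 ≤ H.card := Finset.card_pos.mpr hne
          have hKpos : 1 ≤ K.card := Finset.card_pos.mpr hKne
          omega
        have hclogH : 2 ≤ Nat.clog 2 H.card := by
          have : (2:ℕ)^1 < H.card := by omega
          have := (Nat.lt_clog_iff_pow_lt (by norm_num)).mpr this
          omega
        have hmaxH : max 1 (Nat.clog 2 H.card) = Nat.clog 2 H.card := by omega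
        rw [hmaxH]
        rcases Nat.lt_or_ge K.card 2 with hK1 | hK2
        · -- K.card = 1
          have : K.card = 1 := by
            have := Finset.card_pos.mpr hKne; omega
          rw [this] at hX'card
          simp [Nat.clog] at hX'card
          omega
        · -- K.card ≥ 2
          have hmaxK : max 1 (Nat.clog 2 K.card) = Nat.clog 2 K.card := by
            have := Nat.clog_pos (b := 2) (by norm_num) hK2
            omega
          rw [hmaxK] at hX'card
          have hpow : (2:ℕ) ^ Nat.clog 2 K.card < H.card := by
            have h1 : (2:ℕ) ^ (Nat.clog 2 K.card - 1) < K.card :=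
              Nat.pow_pred_clog_lt_self (by norm_num) hK2
            have hpos := Nat.clog_pos (b := 2) (by norm_num) hK2
            have : (2:ℕ) ^ Nat.clog 2 K.card = 2 * 2 ^ (Nat.clog 2 K.card - 1) := by
              rw [← pow_succ']
              congr 1
              omega
            omega
          have := (Nat.lt_clog_iff_pow_lt (b := 2) (by norm_num)).mpr hpow
          omega
      · -- generation
        intro S hXS hScl q hq
        have hxS : x ∈ S := hXS (by simp)
        have hKS : ↑K ⊆ S := hX'gen S (fun a ha => hXS (Finset.mem_coe.mpr
          (Finset.mem_insert.mpr (Or.inr (Finset.mem_coe.mp ha))))) hScl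
        -- T = H ∩ S is closed, contains K and x, so equals H by maximality
        set T : Finset Q := H.filter (fun a => a ∈ S) with hT
        have hTH : T ⊆ H := Finset.filter_subset _ _
        have hTne : T.Nonempty := ⟨x, by simp [hT, hxH, hxS]⟩
        have hTcl : ∀ a ∈ T, ∀ b ∈ T, mul a b ∈ T ∧ ld a b ∈ T ∧ rd a b ∈ T := by
          intro a ha b hb
          simp only [hT, Finset.mem_filter] at ha hb ⊢
          obtain ⟨haH', haS'⟩ := ha
          obtain ⟨hbH', hbS'⟩ := hb
          exact ⟨⟨(hclosed a haH' b hbH').1, (hScl a haS' b hbS').1⟩,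
                 ⟨(hclosed a haH' b hbH').2.1, (hScl a haS' b hbS').2.1⟩,
                 ⟨(hclosed a haH' b hbH').2.2, (hScl a haS' b hbS').2.2⟩⟩
        have hTeq : T = H := by
          by_contra hTneH
          have hT𝒦 : T ∈ 𝒦 :=
            Finset.mem_filter.mpr ⟨Finset.mem_powerset.mpr hTH, hTne, hTneH, hTcl⟩
          have hle := hKmax T hT𝒦
          have hKT : K ⊆ T := by
            intro k hk
            simp [hT, hKH hk, hKS (by exact_mod_cast hk)]
          have hxT : x ∈ T := by simp [hT, hxH, hxS]
          have : K.card < T.card := Finset.card_lt_card ⟨hKT, fun hc => hxK (hc hxT)⟩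
          omega
        have : q ∈ T := hTeq ▸ hq
        simp only [hT, Finset.mem_filter] at this
        exact this.2
  · -- no proper nonempty closed subset: a single element generates
    obtain ⟨h0, hh0⟩ := hne
    refine ⟨{h0}, by simpa using hh0, by simp, ?_⟩
    intro S hXS hScl q hq
    classical
    set T : Finset Q := H.filter (fun a => a ∈ S) with hT
    have hTH : T ⊆ H := Finset.filter_subset _ _
    have hTne : T.Nonempty := ⟨h0, by simp [hT, hh0, hXS (by simp : h0 ∈ (↑({h0} : Finset Q) : Set Q))]⟩
    have hTcl : ∀ a ∈ T, ∀ b ∈ T, mul a b ∈ T ∧ ld a b ∈ T ∧ rd a b ∈ T := by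
      intro a ha b hb
      simp only [hT, Finset.mem_filter] at ha hb ⊢
      obtain ⟨haH', haS'⟩ := ha
      obtain ⟨hbH', hbS'⟩ := hb
      exact ⟨⟨(hclosed a haH' b hbH').1, (hScl a haS' b hbS').1⟩,
             ⟨(hclosed a haH' b hbH').2.1, (hScl a haS' b hbS').2.1⟩,
             ⟨(hclosed a haH' b hbH').2.2, (hScl a haS' b hbS').2.2⟩⟩
    have hTeq : T = H := by
      by_contra hTneH
      exact hprop ⟨T, hTH, hTne, hTneH, hTcl⟩
    have : q ∈ T := hTeq ▸ hq
    simp only [hT, Finset.mem_filter] at this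
    exact this.2



/-- Every finite quasigroup of order `n ≥ 1` has a generating set of size at most
`⌈log₂ n⌉`, where generation means: every nonempty subset containing the generators
and closed under multiplication, left division and right division is all of `Q`. -/
theorem quasigroup_small_generating_set {Q : Type*} [Fintype Q]
    (mul ld rd : Q → Q → Q)
    (hleft : ∀ a b : Q, ∃! x : Q, mul a x = b)
    (hright : ∀ a b : Q, ∃! y : Q, mul y a = b)
    (hld : ∀ a b : Q, mul a (ld a b) = b)
    (hrd : ∀ a b : Q, mul (rd a b) b = a)
    (hn : 1 ≤ Fintype.card Q) :
    ∃ X : Finset Q, X.card ≤ Nat.clog 2 (Fintype.card Q) ∧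
      ∀ S : Set Q, S.Nonempty → ↑X ⊆ S →
        (∀ a ∈ S, ∀ b ∈ S, mul a b ∈ S ∧ ld a b ∈ S ∧ rd a b ∈ S) →
        ∀ q : Q, q ∈ S := by
  rcases eq_or_lt_of_le hn with h1 | h2
  · -- card = 1 : the empty set generates
    refine ⟨∅, by simp, ?_⟩
    intro S hSne _ _ q
    obtain ⟨s, hs⟩ := hSne
    have : Subsingleton Q := Fintype.card_le_one_iff_subsingleton.mp (by omega)
    rwa [Subsingleton.elim q s]
  · -- card ≥ 2 : use the key lemma with H = univ
    have huniv : (Finset.univ : Finset Q).Nonempty :=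
      Finset.univ_nonempty_iff.mpr (Fintype.card_pos_iff.mp (by omega))
    obtain ⟨X, _, hXcard, hXgen⟩ := quasigroup_key mul ld rd hleft hright hld hrd
      (Finset.univ : Finset Q).card Finset.univ rfl huniv (by simp)
    refine ⟨X, ?_, ?_⟩
    · rw [Finset.card_univ] at hXcard
      have hclog : 1 ≤ Nat.clog 2 (Fintype.card Q) :=
        Nat.clog_pos (by norm_num) (by omega)
      omega
    · intro S _ hXS hScl q
      exact hXgen S hXS hScl (by simp)
end

section
/- If two finite abelian groups G and H of the same order are not isomorphic, then there exists a prime power p^e such that the number of elements of order p^e in G differs from the number of elements of order p^e in H. -/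
open Finset

-- count of n-th roots of 1 in a finite cyclic group
lemma cyclic_card_pow_eq_one (α : Type*) [Group α] [Fintype α] [IsCyclic α] [DecidableEq α]
    (k : ℕ) :
    (Finset.univ.filter fun a : α => a ^ k = 1).card = Nat.gcd k (Fintype.card α) := by
  set g := Nat.gcd k (Fintype.card α) with hg
  have hcard : 0 < Fintype.card α := Fintype.card_pos
  have hg0 : g ≠ 0 := Nat.ne_of_gt (Nat.gcd_pos_of_pos_right _ hcard)
  have hset : (Finset.univ.filter fun a : α => a ^ k = 1)
      = (Finset.univ.filter fun a : α => a ^ g = 1) := by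
    ext a
    simp only [mem_filter, mem_univ, true_and, ← orderOf_dvd_iff_pow_eq_one]
    constructor
    · intro h; exact Nat.dvd_gcd h (orderOf_dvd_card)
    · intro h; exact h.trans (Nat.gcd_dvd_left _ _)
  rw [hset, ← sum_card_orderOf_eq_card_pow_eq_one hg0]
  rw [Finset.sum_congr rfl fun d hd => IsCyclic.card_orderOf_eq_totient
    (α := α) ((Nat.mem_divisors.mp hd).1.trans (Nat.gcd_dvd_right _ _)), Nat.sum_totient g]

lemma card_pow_eq_one_zmod (m k : ℕ) [NeZero m] :
    Nat.card {y : Multiplicative (ZMod m) // y ^ k = 1} = Nat.gcd k m := by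
  classical
  rw [Nat.card_eq_fintype_card, Fintype.card_subtype]
  have : Fintype.card (Multiplicative (ZMod m)) = m := by
    simp [ZMod.card]
  rw [cyclic_card_pow_eq_one, this]

def pow_eq_one_pi_equiv {ι : Type*} (A : ι → Type*) [∀ i, Monoid (A i)] (k : ℕ) :
    {x : ∀ i, A i // x ^ k = 1} ≃ ∀ i, {y : A i // y ^ k = 1} where
  toFun x i := ⟨x.1 i, by have := congrFun x.2 i; simpa using this⟩
  invFun y := ⟨fun i => (y i).1, funext fun i => by simpa using (y i).2⟩
  left_inv x := rfl
  right_inv y := rfl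

lemma card_pow_eq_one_pi {ι : Type*} [Fintype ι] (A : ι → Type*) [∀ i, Monoid (A i)] (k : ℕ) :
    Nat.card {x : ∀ i, A i // x ^ k = 1} = ∏ i, Nat.card {y : A i // y ^ k = 1} := by
  rw [Nat.card_congr (pow_eq_one_pi_equiv A k), Nat.card_pi]

lemma card_pow_eq_one_congr {G K : Type*} [Monoid G] [Monoid K] (e : G ≃* K) (k : ℕ) :
    Nat.card {g : G // g ^ k = 1} = Nat.card {x : K // x ^ k = 1} :=
  Nat.card_congr (e.toEquiv.subtypeEquiv fun a => by
    simp only [Equiv.coe_fn_mk, MulEquiv.toEquiv_eq_coe, MulEquiv.coe_toEquiv]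
    rw [← map_pow, EmbeddingLike.map_eq_one_iff])

-- trivial second factor
def prodSubsingletonEquiv (A B : Type*) [AddCommMonoid A] [AddCommMonoid B] [Subsingleton B] :
    A × B ≃+ A where
  toFun := Prod.fst
  invFun a := (a, 0)
  left_inv x := Prod.ext rfl (Subsingleton.elim _ _)
  right_inv a := rfl
  map_add' x y := rfl

def piSplitSubtype {ι : Type*} (P : ι → Prop) [DecidablePred P] (B : ι → Type*)
    [∀ i, AddCommMonoid (B i)] :
    (∀ i, B i) ≃+ (∀ i : {i // P i}, B i) × (∀ i : {i // ¬ P i}, B i) :=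
  { Equiv.piEquivPiSubtypeProd P B with
    map_add' := fun x y => rfl }

lemma structure_thm (G : Type*) [CommGroup G] [Finite G] :
    ∃ (ι : Type) (_ : Fintype ι) (p e : ι → ℕ), (∀ i, (p i).Prime) ∧ (∀ i, 0 < e i) ∧
      Nonempty (G ≃* ∀ i, Multiplicative (ZMod (p i ^ e i))) := by
  classical
  obtain ⟨ι, fι, p, hp, e, ⟨f⟩⟩ := AddCommGroup.equiv_directSum_zmod_of_finite (Additive G)
  have hsub : ∀ i : {i // ¬ 0 < e i}, Subsingleton (ZMod (p i.1 ^ e i.1)) := by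
    intro i
    have h : p i.1 ^ e i.1 = 1 := by
      have : e i.1 = 0 := by omega
      simp [this]
    exact (congrArg ZMod h) ▸ inferInstance
  haveI := hsub
  refine ⟨{i // 0 < e i}, inferInstance, fun i => p i.1, fun i => e i.1,
    fun i => hp i.1, fun i => i.2, ⟨?_⟩⟩
  exact MulEquiv.toAdditive.symm <|
    (f.trans (DirectSum.addEquivProd _)).trans <|
    ((piSplitSubtype (fun i => 0 < e i) _).trans
      (prodSubsingletonEquiv _ _)).trans <|
    MulEquiv.toAdditiveRight <| MulEquiv.piMultiplicative _

lemma natcard_pow_eq_one_sum {G : Type*} [Group G] [Fintype G] [DecidableEq G] (n : ℕ)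
    (hn : n ≠ 0) :
    Nat.card {g : G // g ^ n = 1} =
      ∑ m ∈ (Finset.range n.succ).filter (· ∣ n), Nat.card {g : G // orderOf g = m} := by
  rw [Nat.card_eq_fintype_card, Fintype.card_subtype, ← sum_card_orderOf_eq_card_pow_eq_one hn]
  exact Finset.sum_congr (Nat.filter_dvd_eq_divisors hn).symm fun m _ => by rw [Nat.card_eq_fintype_card, Fintype.card_subtype]

lemma natcard_orderOf_eq_one (G : Type*) [Group G] : Nat.card {g : G // orderOf g = 1} = 1 := by
  have : Unique {g : G // orderOf g = 1} :=
    ⟨⟨⟨1, orderOf_one⟩⟩, fun x => Subtype.ext (orderOf_eq_one_iff.mp x.2)⟩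
  exact Nat.card_unique

lemma powcount_of_ordercount {G H : Type*} [Group G] [Group H] [Finite G] [Finite H]
    (hcount : ∀ p e : ℕ, p.Prime → 0 < e →
      Nat.card {g : G // orderOf g = p ^ e} = Nat.card {h : H // orderOf h = p ^ e})
    (r k : ℕ) (hr : r.Prime) :
    Nat.card {g : G // g ^ r ^ k = 1} = Nat.card {h : H // h ^ r ^ k = 1} := by
  classical
  have : Fintype G := Fintype.ofFinite G
  have : Fintype H := Fintype.ofFinite H
  have hn : r ^ k ≠ 0 := pow_ne_zero _ hr.pos.ne'
  rw [natcard_pow_eq_one_sum _ hn, natcard_pow_eq_one_sum _ hn]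
  refine Finset.sum_congr rfl fun m hm => ?_
  obtain ⟨j, hj, rfl⟩ := (Nat.dvd_prime_pow hr).mp (Finset.mem_filter.mp hm).2
  rcases Nat.eq_zero_or_pos j with rfl | hjpos
  · simp only [pow_zero]
    rw [natcard_orderOf_eq_one, natcard_orderOf_eq_one]
  · exact hcount r j hr hjpos

lemma gcd_pow_pow (r k e : ℕ) : Nat.gcd (r ^ k) (r ^ e) = r ^ min k e := by
  rcases le_total k e with h | h
  · rw [Nat.gcd_eq_left (pow_dvd_pow r h), min_eq_left h]
  · rw [Nat.gcd_eq_right (pow_dvd_pow r h), min_eq_right h]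

lemma model_count {ι : Type*} [Fintype ι] [DecidableEq ι] (p e : ι → ℕ)
    (hp : ∀ i, (p i).Prime) (r k : ℕ) (hr : r.Prime) :
    Nat.card {x : ∀ i, Multiplicative (ZMod (p i ^ e i)) // x ^ r ^ k = 1} =
      r ^ ∑ i ∈ Finset.univ.filter (fun i => p i = r), min k (e i) := by
  classical
  haveI : ∀ i, NeZero (p i ^ e i) := fun i => ⟨pow_ne_zero _ (hp i).pos.ne'⟩
  rw [card_pow_eq_one_pi,
    Finset.prod_congr rfl (fun i _ => card_pow_eq_one_zmod (p i ^ e i) (r ^ k))]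
  calc ∏ i, Nat.gcd (r ^ k) (p i ^ e i)
      = ∏ i, (if p i = r then r ^ min k (e i) else 1) := by
        refine Finset.prod_congr rfl fun i _ => ?_
        split_ifs with h
        · rw [h, gcd_pow_pow]
        · exact Nat.Coprime.pow _ _ ((Nat.coprime_primes hr (hp i)).mpr (fun hh => h hh.symm))
    _ = ∏ i ∈ Finset.univ.filter (fun i => p i = r), r ^ min k (e i) :=
        (Finset.prod_filter _ _).symm
    _ = r ^ ∑ i ∈ Finset.univ.filter (fun i => p i = r), min k (e i) :=
        Finset.prod_pow_eq_pow_sum _ _ _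

lemma step_sum {ι : Type*} [Fintype ι] (P : ι → Prop) [DecidablePred P] (e : ι → ℕ)
    (m : ℕ) (hm : 1 ≤ m) :
    ∑ i ∈ Finset.univ.filter P, min m (e i) =
      ∑ i ∈ Finset.univ.filter P, min (m - 1) (e i) +
        (Finset.univ.filter fun i => P i ∧ m ≤ e i).card := by
  classical
  rw [Finset.sum_congr rfl (fun i _ =>
      show min m (e i) = min (m - 1) (e i) + if m ≤ e i then 1 else 0 by
        split_ifs <;> omega),
    Finset.sum_add_distrib]
  congr 1
  rw [Finset.sum_boole]
  rw [Finset.filter_filter]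
  simp

lemma step_card {ι : Type*} [Fintype ι] (P : ι → Prop) [DecidablePred P] (e : ι → ℕ)
    (m : ℕ) :
    (Finset.univ.filter fun i => P i ∧ m ≤ e i).card =
      (Finset.univ.filter fun i => P i ∧ e i = m).card +
        (Finset.univ.filter fun i => P i ∧ m + 1 ≤ e i).card := by
  classical
  rw [← Finset.card_union_of_disjoint (by
      simp only [Finset.disjoint_left, Finset.mem_filter]
      rintro a ⟨-, -, h⟩ ⟨-, -, h'⟩; omega)]
  congr 1
  ext i
  by_cases hP : P i <;> simp [hP] <;> omega

lemma fiber_count_eq {ι κ : Type*} [Fintype ι] [Fintype κ] (p e : ι → ℕ) (q f : κ → ℕ)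
    (hS : ∀ r k : ℕ, r.Prime →
      ∑ i ∈ Finset.univ.filter (fun i => p i = r), min k (e i) =
      ∑ j ∈ Finset.univ.filter (fun j => q j = r), min k (f j))
    (r m : ℕ) (hr : r.Prime) (hm : 1 ≤ m) :
    (Finset.univ.filter fun i => p i = r ∧ e i = m).card =
      (Finset.univ.filter fun j => q j = r ∧ f j = m).card := by
  classical
  have hA : ∀ n : ℕ, 1 ≤ n →
      (Finset.univ.filter fun i => p i = r ∧ n ≤ e i).card =
      (Finset.univ.filter fun j => q j = r ∧ n ≤ f j).card := by
    intro n hn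
    have h1 := hS r n hr
    have h0 := hS r (n - 1) hr
    have e1 := step_sum (fun i => p i = r) e n hn
    have e2 := step_sum (fun j => q j = r) f n hn
    beta_reduce at e1 e2
    omega
  have c1 := step_card (fun i => p i = r) e m
  have c2 := step_card (fun j => q j = r) f m
  beta_reduce at c1 c2
  have := hA m hm
  have := hA (m + 1) (by omega)
  omega

lemma exists_matching_equiv {ι κ : Type*} [Fintype ι] [Fintype κ] (F : ι → ℕ) (Fq : κ → ℕ)
    (h : ∀ v, Nat.card {i // F i = v} = Nat.card {j // Fq j = v}) :
    ∃ σ : ι ≃ κ, ∀ i, Fq (σ i) = F i := by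
  classical
  have h' : ∀ v : ℕ, Nonempty ({i // F i = v} ≃ {j // Fq j = v}) := fun v =>
    ⟨Fintype.equivOfCardEq (by
      have := h v
      rwa [Nat.card_eq_fintype_card, Nat.card_eq_fintype_card] at this)⟩
  have ev : ∀ v : ℕ, {i // F i = v} ≃ {j // Fq j = v} := fun v => (h' v).some
  refine ⟨(Equiv.sigmaFiberEquiv F).symm.trans
    ((Equiv.sigmaCongrRight ev).trans (Equiv.sigmaFiberEquiv Fq)), fun i => ?_⟩
  simp only [Equiv.trans_apply, Equiv.sigmaFiberEquiv, Equiv.sigmaCongrRight,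
    Equiv.coe_fn_mk, Equiv.coe_fn_symm_mk]
  exact (ev (F i) ⟨i, rfl⟩).2

noncomputable def reindexMulEquiv {ι κ : Type*} (n : ι → ℕ) (n' : κ → ℕ) (σ : ι ≃ κ)
    (h : ∀ i, n' (σ i) = n i) :
    (∀ i, Multiplicative (ZMod (n i))) ≃* ∀ j, Multiplicative (ZMod (n' j)) :=
  (MulEquiv.mk' (Equiv.piCongrLeft' _ σ) (fun a b => rfl)).trans <|
    MulEquiv.piCongrRight fun j =>
      AddEquiv.toMultiplicative
        ((ZMod.ringEquivCongr (show n (σ.symm j) = n' j by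
          rw [← h (σ.symm j), σ.apply_symm_apply])).toAddEquiv)

lemma prime_pow_inj {a b m n : ℕ} (ha : a.Prime) (hb : b.Prime) (hm : 0 < m)
    (h : a ^ m = b ^ n) : a = b ∧ m = n := by
  have hn : 0 < n := by
    rcases Nat.eq_zero_or_pos n with rfl | hn
    · rw [pow_zero] at h
      have := Nat.one_lt_pow hm.ne' ha.one_lt
      omega
    · exact hn
  have hab : a = b := by
    have hd : a ∣ b ^ n := h ▸ dvd_pow_self a hm.ne'
    exact (Nat.prime_dvd_prime_iff_eq ha hb).mp (ha.dvd_of_dvd_pow hd)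
  subst hab
  exact ⟨rfl, Nat.pow_right_injective ha.two_le h⟩

lemma value_fiber_count {ι κ : Type*} [Fintype ι] [Fintype κ] (p e : ι → ℕ) (q f : κ → ℕ)
    (hp : ∀ i, (p i).Prime) (hq : ∀ j, (q j).Prime)
    (he : ∀ i, 0 < e i) (hf : ∀ j, 0 < f j)
    (hS : ∀ r k : ℕ, r.Prime →
      ∑ i ∈ Finset.univ.filter (fun i => p i = r), min k (e i) =
      ∑ j ∈ Finset.univ.filter (fun j => q j = r), min k (f j))
    (v : ℕ) (hex : ∃ i, p i ^ e i = v) :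
    Nat.card {i // p i ^ e i = v} = Nat.card {j // q j ^ f j = v} := by
  classical
  obtain ⟨i₀, rfl⟩ := hex
  set r := p i₀ with hr
  set m := e i₀ with hm
  have hGiff : ∀ i : ι, p i ^ e i = r ^ m ↔ (p i = r ∧ e i = m) := fun i =>
    ⟨fun hh => prime_pow_inj (hp i) (hp i₀) (he i) hh,
     fun ⟨h1, h2⟩ => by rw [h1, h2]⟩
  have hHiff : ∀ j : κ, q j ^ f j = r ^ m ↔ (q j = r ∧ f j = m) := fun j =>
    ⟨fun hh => prime_pow_inj (hq j) (hp i₀) (hf j) hh,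
     fun ⟨h1, h2⟩ => by rw [h1, h2]⟩
  rw [Nat.card_eq_fintype_card, Fintype.card_subtype, Nat.card_eq_fintype_card,
    Fintype.card_subtype, Finset.filter_congr (fun i _ => hGiff i),
    Finset.filter_congr (fun j _ => hHiff j)]
  exact fiber_count_eq p e q f hS r m (hp i₀) (he i₀)

lemma iso_of_counts {G H : Type*} [CommGroup G] [CommGroup H] [Finite G] [Finite H]
    (hcount : ∀ p e : ℕ, p.Prime → 0 < e →
      Nat.card {g : G // orderOf g = p ^ e} = Nat.card {h : H // orderOf h = p ^ e}) :
    Nonempty (G ≃* H) := by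
  classical
  obtain ⟨ι, fι, p, e, hp, he, ⟨eG⟩⟩ := structure_thm G
  obtain ⟨κ, fκ, q, f, hq, hf, ⟨eH⟩⟩ := structure_thm H
  have hS : ∀ r k : ℕ, r.Prime →
      ∑ i ∈ Finset.univ.filter (fun i => p i = r), min k (e i) =
      ∑ j ∈ Finset.univ.filter (fun j => q j = r), min k (f j) := by
    intro r k hrp
    have h1 := model_count p e hp r k hrp
    have h2 := model_count q f hq r k hrp
    have h3 := powcount_of_ordercount hcount r k hrp
    rw [card_pow_eq_one_congr eG, h1] at h3
    rw [card_pow_eq_one_congr eH, h2] at h3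
    exact Nat.pow_right_injective hrp.two_le h3
  have hfib : ∀ v : ℕ, Nat.card {i // p i ^ e i = v} = Nat.card {j // q j ^ f j = v} := by
    intro v
    by_cases hGv : ∃ i, p i ^ e i = v
    · exact value_fiber_count p e q f hp hq he hf hS v hGv
    · by_cases hHv : ∃ j, q j ^ f j = v
      · exact (value_fiber_count q f p e hq hp hf he
          (fun r k hrp => (hS r k hrp).symm) v hHv).symm
      · have : IsEmpty {i // p i ^ e i = v} := ⟨fun x => hGv ⟨x.1, x.2⟩⟩
        have : IsEmpty {j // q j ^ f j = v} := ⟨fun x => hHv ⟨x.1, x.2⟩⟩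
        simp [Nat.card_of_isEmpty]
  obtain ⟨σ, hσ⟩ := exists_matching_equiv (fun i => p i ^ e i) (fun j => q j ^ f j) hfib
  exact ⟨eG.trans ((reindexMulEquiv _ _ σ hσ).trans eH.symm)⟩

/-- If two finite abelian groups of the same order are not isomorphic, then for some
prime power `p^e` they have different numbers of elements of order `p^e`. -/
theorem abelian_noniso_prime_power_order_count {G H : Type*} [CommGroup G]
    [CommGroup H] [Finite G] [Finite H]
    (hcard : Nat.card G = Nat.card H) (hniso : ¬ Nonempty (G ≃* H)) :
    ∃ p e : ℕ, p.Prime ∧ 0 < e ∧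
      Nat.card {g : G // orderOf g = p ^ e} ≠ Nat.card {h : H // orderOf h = p ^ e} := by
  by_contra hc
  push_neg at hc
  exact hniso (iso_of_counts fun p e hp he => hc p e hp he)
end
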